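/- The real vector space h₂(ℍ) of hermitian 2×2 quaternionic matrices has real dimension 6, and the real quadratic form q on h₂(ℍ) defined by q(x) = re(x₁₁)·re(x₂₂) − re(x₁₂ · conj(x₁₂)) is equivalent (isometric as a real quadratic form) to the standard quadratic form of signature (1,5) on ℝ⁶, i.e., to (x₀, x₁, …, x₅) ↦ x₀² − x₁² − x₂² − x₃² − x₄² − x₅². -/

import Mathlib

open scoped Matrix Quaternion

instance : StarModule ℝ ℍ[ℝ] where
  star_smul r q := by ext <;> simp

/-- The quadratic form `q(x) = re(x₁₁)·re(x₂₂) − re(x₁₂ · conj(x₁₂))` on hermitian 2×2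
quaternionic matrices. -/
noncomputable def hermQuadForm (x : selfAdjoint (Matrix (Fin 2) (Fin 2) ℍ[ℝ])) : ℝ :=
  ((x : Matrix (Fin 2) (Fin 2) ℍ[ℝ]) 0 0).re * ((x : Matrix (Fin 2) (Fin 2) ℍ[ℝ]) 1 1).re -
    ((x : Matrix (Fin 2) (Fin 2) ℍ[ℝ]) 0 1 * star ((x : Matrix (Fin 2) (Fin 2) ℍ[ℝ]) 0 1)).re

noncomputable section

abbrev M2Q := Matrix (Fin 2) (Fin 2) ℍ[ℝ]

def matOf (v : Fin 6 → ℝ) : M2Q :=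
  !![((v 0 + v 1 : ℝ) : ℍ[ℝ]), (⟨v 2, v 3, v 4, v 5⟩ : ℍ[ℝ]);
     star ((⟨v 2, v 3, v 4, v 5⟩ : ℍ[ℝ])), ((v 0 - v 1 : ℝ) : ℍ[ℝ])]

lemma matOf_mem (v : Fin 6 → ℝ) : matOf v ∈ selfAdjoint M2Q := by
  rw [selfAdjoint.mem_iff]
  refine Matrix.ext fun i j => ?_
  fin_cases i <;> fin_cases j <;>
    simp [matOf, Matrix.star_apply, Matrix.conjTranspose_apply] <;> exact star_star _

@[simp] lemma vec6_five {α : Type*} (a b c d e f : α) :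
    ![a, b, c, d, e, f] (5 : Fin 6) = f := rfl

@[simp] lemma qlit_add (a b c d e f g h : ℝ) :
    @HAdd.hAdd ℍ[ℝ] ℍ[ℝ] ℍ[ℝ] _ ⟨a, b, c, d⟩ ⟨e, f, g, h⟩ = ⟨a + e, b + f, c + g, d + h⟩ := rfl

@[simp] lemma qlit_smul (r a b c d : ℝ) :
    @HSMul.hSMul ℝ ℍ[ℝ] ℍ[ℝ] _ r ⟨a, b, c, d⟩ = ⟨r * a, r * b, r * c, r * d⟩ := rfl

def ofR6 : (Fin 6 → ℝ) →ₗ[ℝ] selfAdjoint M2Q where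
  toFun v := ⟨matOf v, matOf_mem v⟩
  map_add' u v := by
    apply Subtype.ext
    show matOf (u + v) = matOf u + matOf v
    refine Matrix.ext fun i j => ?_
    fin_cases i <;> fin_cases j <;>
      (simp [matOf, Star.star, Quaternion.instStar._aux_1]; try (ext <;> simp)) <;> push_cast <;> ring
  map_smul' r v := by
    apply Subtype.ext
    show matOf (r • v) = r • matOf v
    refine Matrix.ext fun i j => ?_
    fin_cases i <;> fin_cases j <;>
      (simp [matOf, Star.star, Quaternion.instStar._aux_1]; try (ext <;> simp)) <;> push_cast <;> ring

def toR6 : selfAdjoint M2Q →ₗ[ℝ] (Fin 6 → ℝ) where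
  toFun x := ![(((x : M2Q) 0 0).re + ((x : M2Q) 1 1).re) / 2,
               (((x : M2Q) 0 0).re - ((x : M2Q) 1 1).re) / 2,
               ((x : M2Q) 0 1).re, ((x : M2Q) 0 1).imI,
               ((x : M2Q) 0 1).imJ, ((x : M2Q) 0 1).imK]
  map_add' x y := by
    funext i
    fin_cases i <;> simp [Matrix.cons_val_succ] <;> ring
  map_smul' r x := by
    funext i
    fin_cases i <;> simp [Matrix.cons_val_succ] <;> ring

lemma herm_diag_re (x : selfAdjoint M2Q) (i : Fin 2) :
    (((x : M2Q) i i).re : ℍ[ℝ]) = (x : M2Q) i i := by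
  have hx : star (x : M2Q) = (x : M2Q) := x.2
  have h : star ((x : M2Q) i i) = (x : M2Q) i i := by
    conv_rhs => rw [← hx]
    simp [Matrix.star_apply]
  ext <;> simp_all [Quaternion.ext_iff] <;> linarith

lemma herm_off (x : selfAdjoint M2Q) :
    (x : M2Q) 1 0 = star ((x : M2Q) 0 1) := by
  have hx : star (x : M2Q) = (x : M2Q) := x.2
  conv_lhs => rw [← hx]
  simp [Matrix.star_apply]

def eqR6 : selfAdjoint M2Q ≃ₗ[ℝ] (Fin 6 → ℝ) :=
  LinearEquiv.ofLinear toR6 ofR6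
    (by
      apply LinearMap.ext
      intro v
      funext i
      fin_cases i <;> simp [toR6, ofR6, matOf, Matrix.cons_val_succ] <;> ring)
    (by
      apply LinearMap.ext
      intro x
      apply Subtype.ext
      show matOf (toR6 x) = (x : M2Q)
      have e00 : matOf (toR6 x) 0 0 = (x : M2Q) 0 0 := by
        show ((toR6 x 0 + toR6 x 1 : ℝ) : ℍ[ℝ]) = (x : M2Q) 0 0
        have h : (toR6 x 0 + toR6 x 1 : ℝ) = ((x : M2Q) 0 0).re := by
          show (((x : M2Q) 0 0).re + ((x : M2Q) 1 1).re) / 2 +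
            (((x : M2Q) 0 0).re - ((x : M2Q) 1 1).re) / 2 = _
          ring
        rw [h, herm_diag_re x 0]
      have e11 : matOf (toR6 x) 1 1 = (x : M2Q) 1 1 := by
        show ((toR6 x 0 - toR6 x 1 : ℝ) : ℍ[ℝ]) = (x : M2Q) 1 1
        have h : (toR6 x 0 - toR6 x 1 : ℝ) = ((x : M2Q) 1 1).re := by
          show (((x : M2Q) 0 0).re + ((x : M2Q) 1 1).re) / 2 -
            (((x : M2Q) 0 0).re - ((x : M2Q) 1 1).re) / 2 = _
          ring
        rw [h, herm_diag_re x 1]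
      have e01 : matOf (toR6 x) 0 1 = (x : M2Q) 0 1 := rfl
      have e10 : matOf (toR6 x) 1 0 = (x : M2Q) 1 0 := by
        rw [herm_off x]
        show star (⟨toR6 x 2, toR6 x 3, toR6 x 4, toR6 x 5⟩ : ℍ[ℝ]) = _
        congr 1
      refine Matrix.ext fun i j => ?_
      fin_cases i <;> fin_cases j
      · exact e00
      · exact e01
      · exact e10
      · exact e11)

end

theorem herm2_quaternion_form_signature :
    Module.finrank ℝ (selfAdjoint (Matrix (Fin 2) (Fin 2) ℍ[ℝ])) = 6 ∧
    ∃ e : selfAdjoint (Matrix (Fin 2) (Fin 2) ℍ[ℝ]) ≃ₗ[ℝ] (Fin 6 → ℝ),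
      ∀ x, hermQuadForm x =
        (e x 0) ^ 2 - ((e x 1) ^ 2 + (e x 2) ^ 2 + (e x 3) ^ 2 + (e x 4) ^ 2 + (e x 5) ^ 2) := by
  constructor
  · rw [eqR6.finrank_eq]
    simp
  · refine ⟨eqR6, fun x => ?_⟩
    have hmul : (((x : M2Q) 0 1) * star ((x : M2Q) 0 1)).re =
        ((x : M2Q) 0 1).re ^ 2 + ((x : M2Q) 0 1).imI ^ 2 +
        ((x : M2Q) 0 1).imJ ^ 2 + ((x : M2Q) 0 1).imK ^ 2 := by
      simp [Quaternion.re_mul, Quaternion.re_star]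
      ring
    simp only [hermQuadForm, eqR6, LinearEquiv.ofLinear_apply, toR6]
    simp [hmul]
    ring
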